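/- Let f : (0,1) → ℝ be continuously differentiable with compact support in (0,1). Then ∫₀¹ f(p)² · p/(2(1-p²)) dp ≤ (∫₀¹ f'(p)² · p/(2(1-p²)) dp)^(1/2) · (∫₀¹ f(p)² · (1-p²)² · p/(2(1-p²)) dp)^(1/2). In particular, ∫₀¹ f(p)² (1-p²)² · p/(2(1-p²)) dp ≤ ∫₀¹ f'(p)² · p/(2(1-p²)) dp. -/

import Mathlib

open MeasureTheory intervalIntegral Set

/-- Cauchy–Schwarz for interval integrals. -/
lemma my_cs (c d : ℝ) (hcd : c ≤ d) (u v : ℝ → ℝ)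
    (hu2 : IntervalIntegrable (fun p => u p ^ 2) volume c d)
    (hv2 : IntervalIntegrable (fun p => v p ^ 2) volume c d)
    (huv : IntervalIntegrable (fun p => u p * v p) volume c d) :
    (∫ p in c..d, u p * v p) ≤
      Real.sqrt (∫ p in c..d, u p ^ 2) * Real.sqrt (∫ p in c..d, v p ^ 2) := by
  set A := ∫ p in c..d, u p ^ 2 with hA
  set B := ∫ p in c..d, v p ^ 2 with hB
  have hA0 : 0 ≤ A := intervalIntegral.integral_nonneg hcd (fun x _ => sq_nonneg _)
  have hB0 : 0 ≤ B := intervalIntegral.integral_nonneg hcd (fun x _ => sq_nonneg _)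
  have key : ∀ t : ℝ, 0 < t → (∫ p in c..d, u p * v p) ≤ (t * A + B / t) / 2 := by
    intro t ht
    have hint : IntervalIntegrable (fun p => (t * u p ^ 2 + v p ^ 2 / t) / 2) volume c d :=
      ((hu2.const_mul t).add (hv2.div_const t)).div_const 2
    have h1 : (∫ p in c..d, u p * v p) ≤ ∫ p in c..d, (t * u p ^ 2 + v p ^ 2 / t) / 2 := by
      apply intervalIntegral.integral_mono_on hcd huv hint
      intro x _
      have hvt : v x ^ 2 / t * t = v x ^ 2 := div_mul_cancel₀ _ (ne_of_gt ht)
      nlinarith [sq_nonneg (t * u x - v x), hvt, ht]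
    have h2 : (∫ p in c..d, (t * u p ^ 2 + v p ^ 2 / t) / 2) = (t * A + B / t) / 2 := by
      rw [intervalIntegral.integral_div, intervalIntegral.integral_add (hu2.const_mul t)
        (hv2.div_const t), intervalIntegral.integral_const_mul, intervalIntegral.integral_div]
    linarith
  rcases eq_or_lt_of_le hA0 with hA0' | hA0'
  · have : (∫ p in c..d, u p * v p) ≤ 0 := by
      apply le_of_forall_pos_le_add
      intro ε hε
      have ht : (0:ℝ) < (B + 1) / (2 * ε) := by positivity
      have := key _ ht
      have hBt : B / ((B + 1) / (2 * ε)) ≤ 2 * ε := by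
        rw [div_div_eq_mul_div, div_le_iff₀ (by positivity : (0:ℝ) < B + 1)]
        nlinarith
      calc (∫ p in c..d, u p * v p) ≤ ((B+1)/(2*ε) * A + B / ((B+1)/(2*ε))) / 2 := this
        _ = (B / ((B+1)/(2*ε))) / 2 := by rw [← hA0']; ring
        _ ≤ ε := by linarith
        _ ≤ 0 + ε := by linarith
    calc (∫ p in c..d, u p * v p) ≤ 0 := this
      _ ≤ _ := by positivity
  rcases eq_or_lt_of_le hB0 with hB0' | hB0'
  · have : (∫ p in c..d, u p * v p) ≤ 0 := by
      apply le_of_forall_pos_le_add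
      intro ε hε
      have ht : (0:ℝ) < 2 * ε / A := by positivity
      have := key _ ht
      calc (∫ p in c..d, u p * v p) ≤ (2 * ε / A * A + B / (2 * ε / A)) / 2 := this
        _ = (2 * ε / A * A) / 2 := by rw [← hB0']; simp
        _ = ε := by field_simp
        _ ≤ 0 + ε := by linarith
    calc (∫ p in c..d, u p * v p) ≤ 0 := this
      _ ≤ _ := by positivity
  set x := Real.sqrt A with hx_def
  set y := Real.sqrt B with hy_def
  have hsA : 0 < x := Real.sqrt_pos.2 hA0'
  have hsB : 0 < y := Real.sqrt_pos.2 hB0'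
  have hAA : x ^ 2 = A := Real.sq_sqrt hA0
  have hBB : y ^ 2 = B := Real.sq_sqrt hB0
  have ht : (0:ℝ) < y / x := by positivity
  have := key _ ht
  calc (∫ p in c..d, u p * v p) ≤ (y / x * A + B / (y / x)) / 2 := this
    _ = x * y := by
        rw [← hAA, ← hBB]; field_simp; ring

/-- Product of a continuous function vanishing off a closed subset of `Ioo 0 1`
with a function continuous on `Ioo 0 1` is continuous. -/
lemma my_cont {K : Set ℝ} (hKc : IsClosed K) (hKsub : K ⊆ Set.Ioo 0 1)
    (φ ψ : ℝ → ℝ) (hφ : Continuous φ) (hφ0 : ∀ p ∉ K, φ p = 0)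
    (hψ : ContinuousOn ψ (Set.Ioo 0 1)) : Continuous (fun p => φ p * ψ p) := by
  rw [continuous_iff_continuousAt]
  intro x
  by_cases hx : x ∈ Set.Ioo (0:ℝ) 1
  · exact hφ.continuousAt.mul (hψ.continuousAt (isOpen_Ioo.mem_nhds hx))
  · have hx' : x ∈ Kᶜ := fun h => hx (hKsub h)
    have hev : (fun p => φ p * ψ p) =ᶠ[nhds x] fun _ => 0 := by
      filter_upwards [hKc.isOpen_compl.mem_nhds hx'] with q hq
      simp [hφ0 q hq]
    exact hev.continuousAt

set_option maxHeartbeats 1600000 in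
theorem stmt2 (f : ℝ → ℝ) (hf : ContDiff ℝ 1 f) (hsupp : HasCompactSupport f)
    (hsub : tsupport f ⊆ Set.Ioo 0 1) :
    (∫ p in (0:ℝ)..1, f p ^ 2 * (p / (2 * (1 - p^2)))) ≤
        Real.sqrt (∫ p in (0:ℝ)..1, (deriv f p) ^ 2 * (p / (2 * (1 - p^2)))) *
        Real.sqrt (∫ p in (0:ℝ)..1, f p ^ 2 * (1 - p^2)^2 * (p / (2 * (1 - p^2)))) ∧
    (∫ p in (0:ℝ)..1, f p ^ 2 * (1 - p^2)^2 * (p / (2 * (1 - p^2)))) ≤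
        ∫ p in (0:ℝ)..1, (deriv f p) ^ 2 * (p / (2 * (1 - p^2))) := by
  by_cases hK : tsupport f = ∅
  · have hf0 : f = fun _ => 0 := by
      funext x
      exact image_eq_zero_of_notMem_tsupport (by simp [hK])
    subst hf0
    simp
  -- nonempty compact support
  have hKne : (tsupport f).Nonempty := Set.nonempty_iff_ne_empty.2 hK
  have hKcpt : IsCompact (tsupport f) := hsupp
  set a := sInf (tsupport f) with ha_def
  set b := sSup (tsupport f) with hb_def
  have haK : a ∈ tsupport f := hKcpt.sInf_mem hKne
  have hbK : b ∈ tsupport f := hKcpt.sSup_mem hKne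
  have haI : a ∈ Set.Ioo (0:ℝ) 1 := hsub haK
  have hbI : b ∈ Set.Ioo (0:ℝ) 1 := hsub hbK
  have hKIcc : tsupport f ⊆ Set.Icc a b :=
    fun x hx => ⟨csInf_le hKcpt.bddBelow hx, le_csSup hKcpt.bddAbove hx⟩
  set c := a / 2 with hc_def
  set d := (b + 1) / 2 with hd_def
  have hc0 : (0:ℝ) < c := by simp only [hc_def]; linarith [haI.1]
  have hca : c < a := by simp only [hc_def]; linarith [haI.1]
  have hbd : b < d := by simp only [hd_def]; linarith [hbI.2]
  have hd1 : d < 1 := by simp only [hd_def]; linarith [hbI.2]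
  have hab : a ≤ b := le_csSup hKcpt.bddAbove haK
  have hcd : c ≤ d := by linarith
  have hIccsub : Set.Icc c d ⊆ Set.Ioo (0:ℝ) 1 :=
    fun p hp => ⟨lt_of_lt_of_le hc0 hp.1, lt_of_le_of_lt hp.2 hd1⟩
  have huIcc : Set.uIcc c d = Set.Icc c d := Set.uIcc_of_le hcd
  -- vanishing
  have hfvan : ∀ p, p ∉ Set.Icc a b → f p = 0 :=
    fun p hp => image_eq_zero_of_notMem_tsupport (fun h => hp (hKIcc h))
  have hf'van : ∀ p, p ∉ Set.Icc a b → deriv f p = 0 := by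
    intro p hp
    by_contra h
    exact hp (hKIcc (support_deriv_subset (Function.mem_support.mpr h)))
  -- basic positivity on Icc c d
  have hpos : ∀ p ∈ Set.Icc c d, 0 < p ∧ 0 < 1 - p^2 := by
    intro p hp
    obtain ⟨h1, h2⟩ := hIccsub hp
    exact ⟨h1, by nlinarith⟩
  -- continuity of derivatives etc.
  have hfc : Continuous f := hf.continuous
  have hf'c : Continuous (deriv f) := hf.continuous_deriv le_rfl
  have hKclosed : IsClosed (tsupport f) := isClosed_tsupport f
  have hf0t : ∀ p ∉ tsupport f, f p = 0 := fun p hp => image_eq_zero_of_notMem_tsupport hp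
  have hf'0t : ∀ p ∉ tsupport f, deriv f p = 0 := by
    intro p hp
    by_contra h
    exact hp (support_deriv_subset (Function.mem_support.mpr h))
  have hden : ∀ p ∈ Set.Ioo (0:ℝ) 1, (0:ℝ) < 1 - p^2 := by
    intro p hp; nlinarith [hp.1, hp.2]
  -- weight functions, continuous on Ioo 0 1
  have hwcont : ContinuousOn (fun p : ℝ => p / (2 * (1 - p^2))) (Set.Ioo 0 1) := by
    apply ContinuousOn.div continuousOn_id (by fun_prop)
    intro x hx; have := hden x hx; positivity
  have hwpos : ∀ p ∈ Set.Icc c d, 0 < p / (2 * (1 - p^2)) := by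
    intro p hp
    obtain ⟨h1, h2⟩ := hpos p hp
    positivity
  have hDwcont : ContinuousOn (fun p : ℝ => p / (2 * (1 - p^2)^3)) (Set.Ioo 0 1) := by
    apply ContinuousOn.div continuousOn_id (by fun_prop)
    intro x hx; have := hden x hx; positivity
  have hDwpos : ∀ p ∈ Set.Icc c d, 0 < p / (2 * (1 - p^2)^3) := by
    intro p hp
    obtain ⟨h1, h2⟩ := hpos p hp
    positivity
  set G : ℝ → ℝ := fun p => (((1 - p^2)^2)⁻¹ - 1) / 8 with hG_def
  have hGcont : ContinuousOn G (Set.Ioo 0 1) := by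
    apply ContinuousOn.div _ continuousOn_const (by norm_num)
    apply ContinuousOn.sub _ continuousOn_const
    apply ContinuousOn.inv₀ (by fun_prop)
    intro x hx; have := hden x hx; positivity
  have hGnonneg : ∀ p ∈ Set.Icc c d, 0 ≤ G p := by
    intro p hp
    obtain ⟨h1, h2⟩ := hpos p hp
    have h3 : (1 - p^2)^2 ≤ 1 := by nlinarith [(hIccsub hp).2]
    have h4 : (0:ℝ) < (1 - p^2)^2 := by positivity
    have : (1:ℝ) ≤ ((1 - p^2)^2)⁻¹ := by
      rw [le_inv_comm₀ one_pos h4]; simpa using h3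
    simp only [hG_def]
    linarith
  -- the auxiliary functions for Cauchy-Schwarz
  set u₁ : ℝ → ℝ := fun p => f p * Real.sqrt ((1 - p^2)^2 * (p / (2 * (1 - p^2)))) with hu₁_def
  set v₁ : ℝ → ℝ := fun p => f p * Real.sqrt (p / (2 * (1 - p^2)^3)) with hv₁_def
  set u₂ : ℝ → ℝ := fun p => deriv f p * Real.sqrt (p / (2 * (1 - p^2))) with hu₂_def
  set v₂ : ℝ → ℝ := fun p => f p * (-2 * G p / Real.sqrt (p / (2 * (1 - p^2)))) with hv₂_def
  -- continuity of everything
  have hu₁c : Continuous u₁ := by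
    apply my_cont hKclosed hsub _ _ hfc hf0t
    exact (((continuous_pow 2).comp (continuous_const.sub (continuous_pow 2))).continuousOn.mul hwcont).sqrt
  have hv₁c : Continuous v₁ := my_cont hKclosed hsub _ _ hfc hf0t hDwcont.sqrt
  have hu₂c : Continuous u₂ := by
    apply my_cont hKclosed hsub _ _ hf'c hf'0t hwcont.sqrt
  have hv₂c : Continuous v₂ := by
    apply my_cont hKclosed hsub _ _ hfc hf0t
    apply ContinuousOn.div (by fun_prop (disch := first | exact hGcont | skip) <;> exact hGcont) hwcont.sqrt
    intro x hx
    have h1 : (0:ℝ) < x / (2 * (1 - x^2)) := by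
      have := hden x hx; have := hx.1; positivity
    exact ne_of_gt (Real.sqrt_pos.2 h1)
  have hIintc : Continuous (fun p => f p ^ 2 * (p / (2 * (1 - p^2)))) :=
    my_cont hKclosed hsub _ _ (by fun_prop) (fun p hp => by simp [hf0t p hp]) hwcont
  have hAintc : Continuous (fun p => (deriv f p) ^ 2 * (p / (2 * (1 - p^2)))) :=
    my_cont hKclosed hsub _ _ (by fun_prop) (fun p hp => by simp [hf'0t p hp]) hwcont
  have hBintc : Continuous (fun p => f p ^ 2 * (1 - p^2)^2 * (p / (2 * (1 - p^2)))) :=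
    my_cont hKclosed hsub (fun p => f p ^ 2 * (1 - p^2)^2) _
      (by fun_prop) (fun p hp => by simp [hf0t p hp]) hwcont
  have hDintc : Continuous (fun p => f p ^ 2 * (p / (2 * (1 - p^2)^3))) :=
    my_cont hKclosed hsub _ _ (by fun_prop) (fun p hp => by simp [hf0t p hp]) hDwcont
  have hGintc : Continuous (fun p => 2 * f p * deriv f p * G p) :=
    my_cont hKclosed hsub (fun p => 2 * f p * deriv f p) _
      (by fun_prop) (fun p hp => by simp [hf0t p hp]) hGcont
  -- splitting the integral from 0..1 to c..d
  have hsplit : ∀ g : ℝ → ℝ, Continuous g → (∀ p, p ∉ Set.Icc a b → g p = 0) →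
      (∫ p in (0:ℝ)..1, g p) = ∫ p in c..d, g p := by
    intro g hg hg0
    have hgi : ∀ x y : ℝ, IntervalIntegrable g volume x y := fun x y => hg.intervalIntegrable x y
    have e1 : (∫ p in (0:ℝ)..c, g p) = 0 := by
      rw [intervalIntegral.integral_congr (g := fun _ => (0:ℝ)), intervalIntegral.integral_zero]
      intro p hp
      rw [Set.uIcc_of_le hc0.le] at hp
      exact hg0 p (fun hmem => by linarith [hmem.1, hp.2])
    have e2 : (∫ p in d..(1:ℝ), g p) = 0 := by
      rw [intervalIntegral.integral_congr (g := fun _ => (0:ℝ)), intervalIntegral.integral_zero]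
      intro p hp
      rw [Set.uIcc_of_le hd1.le] at hp
      exact hg0 p (fun hmem => by linarith [hmem.2, hp.1])
    have s1 := intervalIntegral.integral_add_adjacent_intervals (hgi 0 c) (hgi c 1)
    have s2 := intervalIntegral.integral_add_adjacent_intervals (hgi c d) (hgi d 1)
    rw [e1] at s1; rw [e2] at s2
    linarith
  have hInotmem : ∀ p : ℝ, p ≤ c ∨ d ≤ p → p ∉ Set.Icc a b := by
    intro p hp hmem
    rcases hp with h | h
    · linarith [hmem.1]
    · linarith [hmem.2]
  -- rewrite the three goal integrals
  rw [hsplit _ hIintc (fun p hp => by simp [hfvan p hp]),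
      hsplit _ hAintc (fun p hp => by simp [hf'van p hp]),
      hsplit _ hBintc (fun p hp => by simp [hfvan p hp])]
  set Icd := ∫ p in c..d, f p ^ 2 * (p / (2 * (1 - p^2))) with hIcd
  set Acd := ∫ p in c..d, (deriv f p) ^ 2 * (p / (2 * (1 - p^2))) with hAcd
  set Bcd := ∫ p in c..d, f p ^ 2 * (1 - p^2)^2 * (p / (2 * (1 - p^2))) with hBcd
  set Dcd := ∫ p in c..d, f p ^ 2 * (p / (2 * (1 - p^2)^3)) with hDcd
  have hA0 : 0 ≤ Acd := intervalIntegral.integral_nonneg hcd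
    (fun x hx => mul_nonneg (sq_nonneg _) (hwpos x hx).le)
  have hB0 : 0 ≤ Bcd := intervalIntegral.integral_nonneg hcd
    (fun x hx => mul_nonneg (mul_nonneg (sq_nonneg _) (sq_nonneg _)) (hwpos x hx).le)
  have hD0 : 0 ≤ Dcd := intervalIntegral.integral_nonneg hcd
    (fun x hx => mul_nonneg (sq_nonneg _) (hDwpos x hx).le)
  have hI0 : 0 ≤ Icd := intervalIntegral.integral_nonneg hcd
    (fun x hx => mul_nonneg (sq_nonneg _) (hwpos x hx).le)
  -- Integration by parts: ∫ (2 f f' G + f² Dw) = 0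
  have hibp : (∫ p in c..d, (2 * f p * deriv f p * G p + f p ^ 2 * (p / (2 * (1 - p^2)^3)))) = 0 := by
    have hder : ∀ x ∈ Set.uIcc c d, HasDerivAt (fun p => f p ^ 2 * G p)
        (2 * f x * deriv f x * G x + f x ^ 2 * (x / (2 * (1 - x^2)^3))) x := by
      intro x hx
      rw [huIcc] at hx
      obtain ⟨hx0, hx1⟩ := hpos x hx
      have hne : (1:ℝ) - x^2 ≠ 0 := ne_of_gt hx1
      have h1 : HasDerivAt f (deriv f x) x := (hf.differentiable one_ne_zero x).hasDerivAt
      have h2 : HasDerivAt (fun p => f p ^ 2) (2 * f x * deriv f x) x := by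
        have := h1.fun_pow 2
        refine this.congr_deriv ?_
        push_cast
        ring
      have h3 : HasDerivAt (fun p : ℝ => 1 - p^2) (-(2*x)) x := by
        simpa using (hasDerivAt_pow 2 x).const_sub 1
      have h4 : HasDerivAt (fun p : ℝ => (1 - p^2)^2) (2 * (1-x^2)^1 * (-(2*x))) x := by
        exact_mod_cast h3.pow 2
      have h5 : HasDerivAt (fun p : ℝ => ((1 - p^2)^2)⁻¹)
          (-(2 * (1-x^2)^1 * (-(2*x))) / ((1-x^2)^2)^2) x := h4.inv (pow_ne_zero 2 hne)
      have h6 : HasDerivAt G ((-(2 * (1-x^2)^1 * (-(2*x))) / ((1-x^2)^2)^2) / 8) x :=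
        (h5.sub_const 1).div_const 8
      have := h2.fun_mul h6
      refine this.congr_deriv ?_
      field_simp
      ring
    have hint : IntervalIntegrable
        (fun p => (2 * f p * deriv f p * G p + f p ^ 2 * (p / (2 * (1 - p^2)^3)))) volume c d :=
      (hGintc.add hDintc).intervalIntegrable c d
    rw [intervalIntegral.integral_eq_sub_of_hasDerivAt hder hint]
    have hfc0 : f c = 0 := hfvan c (hInotmem c (Or.inl le_rfl))
    have hfd0 : f d = 0 := hfvan d (hInotmem d (Or.inr le_rfl))
    simp [hfc0, hfd0]
  have hDsplit : Dcd = - ∫ p in c..d, 2 * f p * deriv f p * G p := by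
    have := intervalIntegral.integral_add (hGintc.intervalIntegrable (μ := volume) c d)
      (hDintc.intervalIntegrable (μ := volume) c d)
    rw [this] at hibp
    rw [hDcd]; linarith
  -- pointwise facts on Icc c d
  have hPu₂v₂ : ∀ p ∈ Set.uIcc c d, u₂ p * v₂ p = -(2 * f p * deriv f p * G p) := by
    intro p hp
    rw [huIcc] at hp
    have hw := hwpos p hp
    have hsw : Real.sqrt (p / (2 * (1 - p^2))) ≠ 0 := ne_of_gt (Real.sqrt_pos.2 hw)
    simp only [hu₂_def, hv₂_def]
    field_simp
  have hPu₂sq : ∀ p ∈ Set.uIcc c d, u₂ p ^ 2 = (deriv f p) ^ 2 * (p / (2 * (1 - p^2))) := by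
    intro p hp
    rw [huIcc] at hp
    simp only [hu₂_def]
    rw [mul_pow, Real.sq_sqrt (hwpos p hp).le]
  have hPv₂sq : ∀ p ∈ Set.Icc c d, v₂ p ^ 2 ≤ f p ^ 2 * (p / (2 * (1 - p^2)^3)) := by
    intro p hp
    obtain ⟨hp0, hp1⟩ := hpos p hp
    have hw := hwpos p hp
    have hG0 := hGnonneg p hp
    have hGval : G p = p^2 * (2 - p^2) / (8 * (1 - p^2)^2) := by
      simp only [hG_def]
      field_simp
      ring
    have hp1' : p < 1 := (hIccsub hp).2
    have hsq : Real.sqrt (p / (2 * (1 - p^2))) ^ 2 = p / (2 * (1 - p^2)) :=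
      Real.sq_sqrt hw.le
    have hv2 : v₂ p ^ 2 = f p ^ 2 * ((-2 * G p)^2 / (p / (2 * (1 - p^2)))) := by
      simp only [hv₂_def]
      rw [mul_pow, div_pow, hsq]
    rw [hv2]
    apply mul_le_mul_of_nonneg_left _ (sq_nonneg (f p))
    have h1p2 : (0:ℝ) < 1 - p^2 := hp1
    have h2G : (-2 * G p)^2 / (p / (2 * (1 - p^2))) = p^3 * (2 - p^2)^2 / (8 * (1 - p^2)^3) := by
      rw [hGval]
      field_simp
      ring
    have hcube : (0:ℝ) < (1 - p^2)^3 := pow_pos h1p2 3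
    have hden1 : (0:ℝ) < 8 * (1 - p^2)^3 := by linarith
    have hden2 : (0:ℝ) < 2 * (1 - p^2)^3 := by linarith
    rw [h2G, div_le_div_iff₀ hden1 hden2]
    have key : p * (2 - p^2) ≤ 2 := by nlinarith
    have ht0 : 0 ≤ p * (2 - p^2) := mul_nonneg hp0.le (by nlinarith)
    have ht4 : (p * (2 - p^2))^2 ≤ 4 := by nlinarith [key, ht0]
    have hfin : 0 ≤ p * (1 - p^2)^3 * (4 - (p * (2 - p^2))^2) :=
      mul_nonneg (mul_nonneg hp0.le (pow_nonneg h1p2.le 3)) (by linarith)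
    nlinarith [hfin]
  have hPu₁v₁ : ∀ p ∈ Set.uIcc c d, u₁ p * v₁ p = f p ^ 2 * (p / (2 * (1 - p^2))) := by
    intro p hp
    rw [huIcc] at hp
    obtain ⟨hp0, hp1⟩ := hpos p hp
    have hX : (0:ℝ) ≤ (1 - p^2)^2 * (p / (2 * (1 - p^2))) :=
      mul_nonneg (sq_nonneg _) (hwpos p hp).le
    have hXY : ((1 - p^2)^2 * (p / (2 * (1 - p^2)))) * (p / (2 * (1 - p^2)^3))
        = (p / (2 * (1 - p^2)))^2 := by
      field_simp
    simp only [hu₁_def, hv₁_def]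
    calc f p * Real.sqrt ((1 - p^2)^2 * (p / (2 * (1 - p^2)))) *
          (f p * Real.sqrt (p / (2 * (1 - p^2)^3)))
        = f p ^ 2 * (Real.sqrt ((1 - p^2)^2 * (p / (2 * (1 - p^2)))) *
            Real.sqrt (p / (2 * (1 - p^2)^3))) := by ring
      _ = f p ^ 2 * Real.sqrt (((1 - p^2)^2 * (p / (2 * (1 - p^2)))) * (p / (2 * (1 - p^2)^3))) := by
          rw [← Real.sqrt_mul hX]
      _ = f p ^ 2 * (p / (2 * (1 - p^2))) := by
          rw [hXY, Real.sqrt_sq (hwpos p hp).le]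
  have hPu₁sq : ∀ p ∈ Set.uIcc c d, u₁ p ^ 2 = f p ^ 2 * (1 - p^2)^2 * (p / (2 * (1 - p^2))) := by
    intro p hp
    rw [huIcc] at hp
    have hX : (0:ℝ) ≤ (1 - p^2)^2 * (p / (2 * (1 - p^2))) :=
      mul_nonneg (sq_nonneg _) (hwpos p hp).le
    simp only [hu₁_def]
    rw [mul_pow, Real.sq_sqrt hX]
    ring
  have hPv₁sq : ∀ p ∈ Set.uIcc c d, v₁ p ^ 2 = f p ^ 2 * (p / (2 * (1 - p^2)^3)) := by
    intro p hp
    rw [huIcc] at hp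
    simp only [hv₁_def]
    rw [mul_pow, Real.sq_sqrt (hDwpos p hp).le]
  -- Step 2: Dcd ≤ Acd
  have hDA : Dcd ≤ Acd := by
    have e1 : Dcd = ∫ p in c..d, u₂ p * v₂ p := by
      rw [hDsplit, intervalIntegral.integral_congr hPu₂v₂, intervalIntegral.integral_neg]
    have e2 : (∫ p in c..d, u₂ p ^ 2) = Acd := intervalIntegral.integral_congr hPu₂sq
    have e3 : (∫ p in c..d, v₂ p ^ 2) ≤ Dcd :=
      intervalIntegral.integral_mono_on hcd ((hv₂c.pow 2).intervalIntegrable c d)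
        (hDintc.intervalIntegrable c d) hPv₂sq
    have e4 : 0 ≤ ∫ p in c..d, v₂ p ^ 2 :=
      intervalIntegral.integral_nonneg hcd (fun x _ => sq_nonneg _)
    have hcs := my_cs c d hcd u₂ v₂ ((hu₂c.pow 2).intervalIntegrable c d)
      ((hv₂c.pow 2).intervalIntegrable c d) ((hu₂c.mul hv₂c).intervalIntegrable c d)
    rw [e2] at hcs
    have e5 : Real.sqrt (∫ p in c..d, v₂ p ^ 2) ≤ Real.sqrt Dcd := Real.sqrt_le_sqrt e3
    have e6 : Dcd ≤ Real.sqrt Acd * Real.sqrt Dcd := by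
      calc Dcd = ∫ p in c..d, u₂ p * v₂ p := e1
        _ ≤ Real.sqrt Acd * Real.sqrt (∫ p in c..d, v₂ p ^ 2) := hcs
        _ ≤ Real.sqrt Acd * Real.sqrt Dcd :=
            mul_le_mul_of_nonneg_left e5 (Real.sqrt_nonneg _)
    nlinarith [Real.sq_sqrt hA0, Real.sq_sqrt hD0, Real.sqrt_nonneg Acd, Real.sqrt_nonneg Dcd,
      sq_nonneg (Real.sqrt Dcd - Real.sqrt Acd)]
  -- Step 1: Icd ≤ √Acd √Bcd
  have hfirst : Icd ≤ Real.sqrt Acd * Real.sqrt Bcd := by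
    have e1 : Icd = ∫ p in c..d, u₁ p * v₁ p :=
      (intervalIntegral.integral_congr hPu₁v₁).symm
    have e2 : (∫ p in c..d, u₁ p ^ 2) = Bcd := intervalIntegral.integral_congr hPu₁sq
    have e3 : (∫ p in c..d, v₁ p ^ 2) = Dcd := intervalIntegral.integral_congr hPv₁sq
    have hcs := my_cs c d hcd u₁ v₁ ((hu₁c.pow 2).intervalIntegrable c d)
      ((hv₁c.pow 2).intervalIntegrable c d) ((hu₁c.mul hv₁c).intervalIntegrable c d)
    rw [e2, e3] at hcs
    calc Icd = ∫ p in c..d, u₁ p * v₁ p := e1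
      _ ≤ Real.sqrt Bcd * Real.sqrt Dcd := hcs
      _ ≤ Real.sqrt Bcd * Real.sqrt Acd :=
          mul_le_mul_of_nonneg_left (Real.sqrt_le_sqrt hDA) (Real.sqrt_nonneg _)
      _ = Real.sqrt Acd * Real.sqrt Bcd := mul_comm _ _
  -- Step 3: Bcd ≤ Acd
  have hBI : Bcd ≤ Icd := by
    apply intervalIntegral.integral_mono_on hcd (hBintc.intervalIntegrable c d)
      (hIintc.intervalIntegrable c d)
    intro p hp
    obtain ⟨hp0, hp1⟩ := hpos p hp
    have h1 : (1 - p^2)^2 ≤ 1 := by nlinarith [(hIccsub hp).2]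
    have h2 : 0 ≤ f p ^ 2 * (p / (2 * (1 - p^2))) :=
      mul_nonneg (sq_nonneg _) (hwpos p hp).le
    nlinarith [mul_nonneg (sq_nonneg (f p)) (hwpos p hp).le]
  have hsecond : Bcd ≤ Acd := by
    have h1 : Bcd ≤ Real.sqrt Acd * Real.sqrt Bcd := le_trans hBI hfirst
    nlinarith [Real.sq_sqrt hA0, Real.sq_sqrt hB0, Real.sqrt_nonneg Acd, Real.sqrt_nonneg Bcd,
      sq_nonneg (Real.sqrt Bcd - Real.sqrt Acd)]
  exact ⟨hfirst, hsecond⟩
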